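/- Let D be a Prüfer domain and I a nonzero finitely generated fractional ideal of D. Then I = p(I)·n(I)⁻¹, where p(I) = I ∩ D and n(I) = I⁻¹ ∩ D. -/

import Mathlib

/-- `z ∈ K` is almost integral over `D` if there is a nonzero `c ∈ D` with
`c·zⁿ ∈ D` for every positive integer `n`. -/
def AlmostIntegral (D : Type*) {K : Type*} [CommRing D] [CommRing K] [Algebra D K]
    (z : K) : Prop :=
  ∃ c : D, c ≠ 0 ∧ ∀ n : ℕ, 0 < n → ∃ d : D, algebraMap D K c * z ^ n = algebraMap D K d

open nonZeroDivisors FractionalIdeal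

lemma val_exists_dvd {R : Type*} [CommRing R] [IsDomain R] [ValuationRing R]
    (s : Finset R) (hs : s.Nonempty) : ∃ a ∈ s, ∀ b ∈ s, a ∣ b := by
  classical
  induction s using Finset.induction with
  | empty => exact absurd hs (by simp)
  | @insert x t hx ih =>
    rcases t.eq_empty_or_nonempty with rfl | ht
    · exact ⟨x, by simp⟩
    · obtain ⟨a, ha, hd⟩ := ih ht
      rcases ValuationRing.dvd_total x a with h | h
      · exact ⟨x, Finset.mem_insert_self _ _, fun b hb => by
          rcases Finset.mem_insert.mp hb with rfl | hb
          · exact dvd_rfl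
          · exact h.trans (hd b hb)⟩
      · exact ⟨a, Finset.mem_insert_of_mem ha, fun b hb => by
          rcases Finset.mem_insert.mp hb with rfl | hb
          · exact h
          · exact hd b hb⟩

lemma integral_invertible (D K : Type*) [CommRing D] [IsDomain D] [Field K] [Algebra D K]
    [IsFractionRing D K]
    (hPruf : ∀ (P : Ideal D) [P.IsPrime], ValuationRing (Localization.AtPrime P))
    (J : Ideal D) (hJ0 : J ≠ ⊥) (hfg : J.FG) :
    (J : FractionalIdeal D⁰ K) * (J : FractionalIdeal D⁰ K)⁻¹ = 1 := by
  classical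
  by_contra hne
  have hle : (J : FractionalIdeal D⁰ K) * (J : FractionalIdeal D⁰ K)⁻¹ ≤ 1 := by
    rw [inv_eq]; exact mul_one_div_le_one
  obtain ⟨T, hT⟩ := le_one_iff_exists_coeIdeal.mp hle
  have hTne : T ≠ ⊤ := by
    rintro rfl
    exact hne (by rw [← hT, coeIdeal_top])
  obtain ⟨P, hPmax, hTP⟩ := Ideal.exists_le_maximal T hTne
  haveI : P.IsPrime := hPmax.isPrime
  haveI := hPruf P
  obtain ⟨s, hsJ⟩ := hfg
  set f := algebraMap D (Localization.AtPrime P) with hf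
  have hfinj : Function.Injective f :=
    IsLocalization.injective _ P.primeCompl_le_nonZeroDivisors
  -- s is nonempty (else J = ⊥)
  have hs : s.Nonempty := by
    rcases s.eq_empty_or_nonempty with rfl | h
    · exact absurd (by simpa using hsJ.symm) hJ0
    · exact h
  -- find a generator whose image divides all others
  obtain ⟨fa, hfa, hdvd'⟩ := val_exists_dvd (s.image f) (hs.image f)
  obtain ⟨a, has, rfl⟩ := Finset.mem_image.mp hfa
  have hdvd : ∀ b ∈ s, f a ∣ f b := fun b hb =>
    hdvd' (f b) (Finset.mem_image_of_mem f hb)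
  -- a ≠ 0
  have ha0 : a ≠ 0 := by
    rintro rfl
    apply hJ0
    rw [← hsJ, Ideal.span_eq_bot]
    intro b hb
    have h2 := hdvd b hb
    rw [_root_.map_zero, zero_dvd_iff] at h2
    exact hfinj (by rw [h2, _root_.map_zero])
  -- for each b ∈ s, find t_b ∉ P and r_b with t_b * b = a * r_b
  have key : ∀ b ∈ s, ∃ t : D, t ∈ P.primeCompl ∧ ∃ r : D, t * b = a * r := by
    intro b hb
    obtain ⟨c, hc⟩ := hdvd b hb
    obtain ⟨⟨r, t⟩, hrt : IsLocalization.mk' (Localization.AtPrime P) r t = c⟩ :=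
      IsLocalization.mk'_surjective P.primeCompl c
    refine ⟨t, t.2, r, hfinj ?_⟩
    have h4 := IsLocalization.mk'_spec (Localization.AtPrime P) r t
    rw [_root_.map_mul, _root_.map_mul, hc, ← hrt]
    linear_combination (f a) * h4
  choose! t ht r hr using key
  -- the product of the t's
  set u : D := ∏ b ∈ s, t b with hu
  have huP : u ∉ P := by
    intro hmem
    have : ∀ b ∈ s, t b ∉ P := fun b hb => ht b hb
    have hne' : u ∈ P.primeCompl := Submonoid.prod_mem _ (fun b hb => ht b hb)
    exact hne' hmem
  -- a divides u * x for all x in J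
  have hdiv : ∀ x ∈ J, a ∣ u * x := by
    intro x hx
    rw [← hsJ] at hx
    induction hx using Submodule.span_induction with
    | mem b hb' =>
      have hb : b ∈ s := Finset.mem_coe.mp hb'
      refine ⟨(∏ c ∈ s.erase b, t c) * r b, ?_⟩
      calc u * b = (∏ c ∈ s.erase b, t c) * (t b * b) := by
            rw [hu, ← Finset.mul_prod_erase s t hb]; ring
        _ = a * ((∏ c ∈ s.erase b, t c) * r b) := by rw [hr b hb]; ring
    | zero => simp
    | add x y _ _ hx hy => rw [mul_add]; exact dvd_add hx hy
    | smul c x _ hx =>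
      rw [smul_eq_mul, mul_left_comm]
      exact hx.mul_left c
  -- build the element z of J⁻¹
  set g := algebraMap D K with hg
  have hga : g a ≠ 0 := fun h => ha0 (IsFractionRing.injective D K (by rw [h, _root_.map_zero]))
  set z : K := g u / g a with hz
  have hzJ : z ∈ ((J : FractionalIdeal D⁰ K))⁻¹ := by
    rw [mem_inv_iff (coeIdeal_ne_zero.mpr hJ0)]
    intro y hy
    obtain ⟨x, hx, rfl⟩ := (mem_coeIdeal _).mp hy
    obtain ⟨d, hd⟩ := hdiv x hx
    rw [mem_one_iff]
    refine ⟨d, ?_⟩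
    have h3 : algebraMap D K u * algebraMap D K x = algebraMap D K a * algebraMap D K d := by
      rw [← _root_.map_mul, ← _root_.map_mul, hd]
    rw [eq_comm, hz, div_mul_eq_mul_div, div_eq_iff hga]
    linear_combination h3
  -- conclude: u ∈ T ≤ P, contradiction
  have haJ : g a ∈ (J : FractionalIdeal D⁰ K) :=
    (mem_coeIdeal _).mpr ⟨a, hsJ ▸ Ideal.subset_span has, rfl⟩
  have hgu : g u ∈ (J : FractionalIdeal D⁰ K) * (J : FractionalIdeal D⁰ K)⁻¹ := by
    have : g u = g a * z := by
      rw [hz, mul_comm, div_mul_cancel₀ _ hga]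
    rw [this]
    exact mul_mem_mul haJ hzJ
  rw [← hT] at hgu
  obtain ⟨w, hwT, hw⟩ := (mem_coeIdeal _).mp hgu
  have : w = u := IsFractionRing.injective D K hw
  exact huP (hTP (this ▸ hwT))

lemma fg_invertible (D K : Type*) [CommRing D] [IsDomain D] [Field K] [Algebra D K]
    [IsFractionRing D K]
    (hPruf : ∀ (P : Ideal D) [P.IsPrime], ValuationRing (Localization.AtPrime P))
    (I : FractionalIdeal D⁰ K) (hI : I ≠ 0) (hfg : (I : Submodule D K).FG) :
    I * I⁻¹ = 1 := by
  obtain ⟨a, J, ha, hIJ⟩ := exists_eq_spanSingleton_mul I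
  have hga : algebraMap D K a ≠ 0 := fun h =>
    ha (IsFractionRing.injective D K (by rw [h, _root_.map_zero]))
  have hJI : (J : FractionalIdeal D⁰ K) = spanSingleton D⁰ (algebraMap D K a) * I := by
    rw [hIJ, ← mul_assoc, spanSingleton_mul_spanSingleton, mul_inv_cancel₀ hga,
      spanSingleton_one, one_mul]
  have hJ0 : J ≠ ⊥ := by
    rintro rfl
    apply hI
    rw [hIJ, coeIdeal_bot, mul_zero]
  have hJfg : J.FG := by
    apply Submodule.fg_of_fg_map_injective (Algebra.linearMap D K) (IsFractionRing.injective D K)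
    have : (Submodule.map (Algebra.linearMap D K) J) = ((J : FractionalIdeal D⁰ K) : Submodule D K) := by
      rw [coe_coeIdeal]; rfl
    rw [this, hJI, coe_mul]
    exact Submodule.FG.mul (by rw [coe_spanSingleton]; exact Submodule.fg_span_singleton _) hfg
  have hJinv := integral_invertible D K hPruf J hJ0 hJfg
  have hX : I * (spanSingleton D⁰ (algebraMap D K a) * (J : FractionalIdeal D⁰ K)⁻¹) = 1 := by
    rw [hIJ]
    rw [show spanSingleton D⁰ (algebraMap D K a)⁻¹ * ↑J *
        (spanSingleton D⁰ (algebraMap D K a) * (↑J)⁻¹) =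
        (spanSingleton D⁰ (algebraMap D K a)⁻¹ * spanSingleton D⁰ (algebraMap D K a)) *
        (↑J * (↑J)⁻¹) by ring]
    rw [spanSingleton_mul_spanSingleton, inv_mul_cancel₀ hga, spanSingleton_one, hJinv, one_mul]
  rw [← right_inverse_eq K I _ hX, hX]


lemma FI_mem_inf {D K : Type*} [CommRing D] [IsDomain D] [Field K] [Algebra D K]
    [IsFractionRing D K] {I J : FractionalIdeal D⁰ K} {x : K} :
    x ∈ I ⊓ J ↔ x ∈ I ∧ x ∈ J := by
  constructor
  · exact fun h => ⟨inf_le_left (a := I) (b := J) h, inf_le_right (a := I) (b := J) h⟩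
  · rintro ⟨h1, h2⟩
    rw [← mem_coe, coe_inf]
    exact Submodule.mem_inf.mpr ⟨mem_coe.mpr h1, mem_coe.mpr h2⟩
open nonZeroDivisors in
theorem stmt8 (D K : Type*) [CommRing D] [IsDomain D] [Field K] [Algebra D K]
    [IsFractionRing D K]
    (hPruf : ∀ (P : Ideal D) [P.IsPrime], ValuationRing (Localization.AtPrime P))
    (I : FractionalIdeal D⁰ K) (hI : I ≠ 0) (hfg : (I : Submodule D K).FG) :
    I = (I ⊓ 1) * (I⁻¹ ⊓ 1)⁻¹ := by
  have h1fg : ((1 : FractionalIdeal D⁰ K) : Submodule D K).FG := by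
    rw [coe_one]
    exact ⟨{1}, by simp [Submodule.one_eq_span]⟩
  set S : FractionalIdeal D⁰ K := I ⊔ 1 with hS
  have h1S : (1 : FractionalIdeal D⁰ K) ≤ S := le_sup_right
  have hIS : I ≤ S := le_sup_left
  have hS0 : S ≠ 0 := fun h =>
    one_ne_zero (α := FractionalIdeal D⁰ K) (le_antisymm (h ▸ h1S) (zero_le _))
  have hSfg : (S : Submodule D K).FG := by
    rw [hS, coe_sup]; exact hfg.sup h1fg
  have hSinv : S * S⁻¹ = 1 := fg_invertible D K hPruf S hS0 hSfg
  -- S⁻¹ = I⁻¹ ⊓ 1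
  have hSinvS : S⁻¹ = I⁻¹ ⊓ 1 := by
    refine SetLike.ext fun x => ?_
    rw [FI_mem_inf, mem_inv_iff hS0, mem_inv_iff hI]
    constructor
    · intro h
      refine ⟨fun y hy => h y (hIS hy), ?_⟩
      have := h 1 (h1S (one_mem_one _))
      rwa [mul_one] at this
    · rintro ⟨h1, h2⟩ y hy
      have hy' : y ∈ (↑S : Submodule D K) := mem_coe.mpr hy
      rw [hS, coe_sup] at hy'
      obtain ⟨p, hp, q, hq, rfl⟩ := Submodule.mem_sup.mp hy'
      rw [mul_add, ← mem_coe]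
      refine add_mem (mem_coe.mpr (h1 p (mem_coe.mp hp))) (mem_coe.mpr ?_)
      have := mul_mem_mul h2 (mem_coe.mp hq)
      rwa [mul_one] at this
  have hSS : (S⁻¹)⁻¹ = S :=
    (right_inverse_eq K S⁻¹ S (by rw [mul_comm]; exact hSinv)).symm
  -- (I ⊓ 1) * S = I
  have hPS : (I ⊓ 1) * S = I := by
    apply le_antisymm
    · rw [mul_le]
      intro i hi j hj
      obtain ⟨hi1, hi2⟩ := FI_mem_inf.mp hi
      have hj' : j ∈ (↑S : Submodule D K) := mem_coe.mpr hj
      rw [hS, coe_sup] at hj'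
      obtain ⟨p, hp, q, hq, rfl⟩ := Submodule.mem_sup.mp hj'
      rw [mul_add, ← mem_coe]
      refine add_mem (mem_coe.mpr ?_) (mem_coe.mpr ?_)
      · have := mul_mem_mul hi2 (mem_coe.mp hp)
        rwa [one_mul] at this
      · have := mul_mem_mul hi1 (mem_coe.mp hq)
        rwa [mul_one] at this
    · have hISinv : I * S⁻¹ ≤ I ⊓ 1 := by
        refine le_inf ?_ ?_
        · rw [mul_le]
          intro i hi y hy
          have hy1 : y ∈ (1 : FractionalIdeal D⁰ K) := by
            have := (mem_inv_iff hS0).mp hy 1 (h1S (one_mem_one _))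
            rwa [mul_one] at this
          have := mul_mem_mul hi hy1
          rwa [mul_one] at this
        · rw [mul_le]
          intro i hi y hy
          have := (mem_inv_iff hS0).mp hy i (hIS hi)
          rwa [mul_comm] at this
      calc I = I * (S * S⁻¹) := by rw [hSinv, mul_one]
        _ = (I * S⁻¹) * S := by ring
        _ ≤ (I ⊓ 1) * S := by gcongr
  rw [← hSinvS, hSS]
  exact hPS.symm
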